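/- Let G = (V,E) be a k-cycle graph over n agents and let I be a greedy-stable independent set in G. Then for every independent set J in G there exists a function μ : J → I such that (1) |α(u)| ≥ |α(μ(u))| for every node u ∈ J, and (2) |μ⁻¹(v)| ≤ |α(v)| for every node v ∈ I, where μ⁻¹(v) = { u ∈ J : μ(u) = v }. -/

import Mathlib

/-!
The `k`-cycle graph framework of Emek–Shpiro, "Barter Exchange with Bounded
Trading Cycles": a `k`-cycle graph over `n` agents is a finite simple graph whose
nodes `v` are labeled by agent sets `α(v) ⊆ [n]` with `2 ≤ |α(v)| ≤ k`, two distinct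
nodes being adjacent iff their labels intersect.
-/

open Finset

/-- A `k`-cycle graph over `n` agents. -/
structure CycleGraph (n k : ℕ) where
  /-- the node set -/
  V : Type
  fintypeV : Fintype V
  decEqV : DecidableEq V
  /-- the agent label of each node -/
  alpha : V → Finset (Fin n)
  two_le_card : ∀ v, 2 ≤ (alpha v).card
  card_le_k : ∀ v, (alpha v).card ≤ k

attribute [instance] CycleGraph.fintypeV CycleGraph.decEqV

namespace CycleGraph

variable {n k : ℕ}

/-- Adjacency: distinct nodes whose agent labels intersect. -/
def Adj (G : CycleGraph n k) (u v : G.V) : Prop :=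
  u ≠ v ∧ ((G.alpha u) ∩ (G.alpha v)).Nonempty

instance (G : CycleGraph n k) : DecidableRel G.Adj := fun u v =>
  inferInstanceAs (Decidable (u ≠ v ∧ ((G.alpha u) ∩ (G.alpha v)).Nonempty))

/-- Independent set: pairwise non-adjacent nodes, i.e., pairwise disjoint labels. -/
def Indep (G : CycleGraph n k) (I : Finset G.V) : Prop :=
  ∀ u ∈ I, ∀ v ∈ I, u ≠ v → G.alpha u ∩ G.alpha v = ∅

instance (G : CycleGraph n k) (I : Finset G.V) : Decidable (G.Indep I) :=
  inferInstanceAs (Decidable (∀ u ∈ I, ∀ v ∈ I, u ≠ v → G.alpha u ∩ G.alpha v = ∅))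

end CycleGraph

/-- An independent set `I` is greedy-stable if every node outside `I` has a neighbor in
`I` of no larger label cardinality (the defining property of the output of the greedy
algorithm that adds non-conflicting nodes in non-decreasing order of `|α(·)|`). -/
def CycleGraph.GreedyStable {n k : ℕ} (G : CycleGraph n k) (I : Finset G.V) : Prop :=
  G.Indep I ∧
    ∀ u : G.V, u ∉ I → ∃ v ∈ I, G.Adj u v ∧ (G.alpha v).card ≤ (G.alpha u).card

/-- Observation: greedy mapping.  If `I` is a greedy-stable
independent set of a `k`-cycle graph `G`, then for every independent set `J` there is a
map `μ : J → I` with `|α(μ(u))| ≤ |α(u)|` for all `u ∈ J` and `|μ⁻¹(v)| ≤ |α(v)|` for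
all `v ∈ I`. -/
theorem greedyStable_mapping (n k : ℕ) (hk : 2 ≤ k) (G : CycleGraph n k)
    (I : Finset G.V) (hI : G.GreedyStable I)
    (J : Finset G.V) (hJ : G.Indep J) :
    ∃ μ : G.V → G.V,
      (∀ u ∈ J, μ u ∈ I) ∧
      (∀ u ∈ J, (G.alpha (μ u)).card ≤ (G.alpha u).card) ∧
      (∀ v ∈ I, (J.filter (fun u => μ u = v)).card ≤ (G.alpha v).card) := by
  classical
  choose f hfI hfAdj hfCard using hI.2
  refine ⟨fun u => if h : u ∈ I then u else f u h, ?_, ?_, ?_⟩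
  · intro u hu
    by_cases h : u ∈ I <;> simp [h, hfI]
  · intro u hu
    by_cases h : u ∈ I <;> simp [h, hfCard]
  · intro v hv
    have hv0 : (G.alpha v).Nonempty :=
      Finset.card_pos.mp (by have := G.two_le_card v; omega)
    have key : ∀ u ∈ J, (if h : u ∈ I then u else f u h) = v →
        (G.alpha u ∩ G.alpha v).Nonempty := by
      intro u hu heq
      by_cases h : u ∈ I
      · simp only [dif_pos h] at heq
        subst heq
        simpa using hv0
      · simp only [dif_neg h] at heq
        have := (hfAdj u h).2
        rw [heq] at this
        exact this
    apply Finset.card_le_card_of_injOn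
      (f := fun u => if h : (G.alpha u ∩ G.alpha v).Nonempty then h.choose else hv0.choose)
    · intro u hu
      replace hu := Finset.mem_filter.mp hu
      have hne := key u hu.1 hu.2
      simp only [dif_pos hne]
      exact (Finset.mem_inter.mp hne.choose_spec).2
    · intro a ha b hb hab
      simp only [Finset.coe_filter, Set.mem_setOf_eq] at ha hb
      have hna := key a ha.1 ha.2
      have hnb := key b hb.1 hb.2
      simp only [dif_pos hna, dif_pos hnb] at hab
      by_contra hne
      have hd := hJ a ha.1 b hb.1 hne
      have h1 : hna.choose ∈ G.alpha a := (Finset.mem_inter.mp hna.choose_spec).1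
      have h2 : hnb.choose ∈ G.alpha b := (Finset.mem_inter.mp hnb.choose_spec).1
      rw [hab] at h1
      have : hnb.choose ∈ G.alpha a ∩ G.alpha b := Finset.mem_inter.mpr ⟨h1, h2⟩
      rw [hd] at this
      exact absurd this (Finset.notMem_empty _)
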